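/- Let (A_n) be a sequence of d×d complex matrices such that the Cesàro means (1/n)·Σ_{k=0}^{n-1} A_k converge to a matrix A, and such that ((1/n)·Σ_{k=0}^{n} ‖A_k‖)_{n≥1} is bounded for a fixed submultiplicative matrix norm ‖·‖. Then for every fixed positive integer k, the normalized elementary symmetric sums of order k satisfy: (1/n^k)·Σ_{0 ≤ i_1 < i_2 < ⋯ < i_k ≤ n−1} A_{i_1}A_{i_2}⋯A_{i_k} converges, as n → ∞, to A^k / k!. -/

import Mathlib

open Filter Topology

attribute [local instance] Matrix.linftyOpNormedAddCommGroup Matrix.linftyOpNormedRing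

attribute [local instance] Matrix.linftyOpNormedSpace

open Finset

set_option maxHeartbeats 1000000


lemma sort_insert_top {s : Finset ℕ} {n : ℕ} (h : ∀ b ∈ s, b < n) :
    (insert n s).sort (· ≤ ·) = s.sort (· ≤ ·) ++ [n] := by
  have hns : n ∉ s := fun hn => lt_irrefl n (h n hn)
  have hperm : ((insert n s).sort (· ≤ ·)).Perm (s.sort (· ≤ ·) ++ [n]) := by
    refine (Finset.sort_perm_toList _ _).trans ?_
    refine (Finset.toList_insert hns).trans ?_
    refine List.Perm.trans ?_ (List.perm_append_singleton n _).symm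
    exact List.Perm.cons n (Finset.sort_perm_toList _ _).symm
  refine List.Perm.eq_of_pairwise' (Finset.pairwise_sort _ _) ?_ hperm
  refine List.pairwise_append.2 ⟨Finset.pairwise_sort _ _, List.pairwise_singleton _ _, ?_⟩
  intro a ha b hb
  rw [List.mem_singleton] at hb
  subst hb
  exact (h a ((Finset.mem_sort _).1 ha)).le

variable {d : ℕ}

noncomputable def esymm (A : ℕ → Matrix (Fin d) (Fin d) ℂ) (k n : ℕ) :
    Matrix (Fin d) (Fin d) ℂ :=
  ∑ s ∈ Finset.powersetCard k (Finset.range n), ((s.sort (· ≤ ·)).map A).prod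

lemma esymm_zero (A : ℕ → Matrix (Fin d) (Fin d) ℂ) (n : ℕ) : esymm A 0 n = 1 := by
  simp [esymm]

lemma esymm_succ_succ (A : ℕ → Matrix (Fin d) (Fin d) ℂ) (k n : ℕ) :
    esymm A (k+1) (n+1) = esymm A (k+1) n + esymm A k n * A n := by
  have hns : n ∉ Finset.range n := by simp
  unfold esymm
  rw [Finset.range_add_one, Finset.powersetCard_succ_insert hns, Finset.sum_union, Finset.sum_image]
  · congr 1
    rw [Finset.sum_mul]
    refine Finset.sum_congr rfl fun s hs => ?_
    have hsub : ∀ b ∈ s, b < n := fun b hb =>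
      Finset.mem_range.1 ((Finset.mem_powersetCard.1 hs).1 hb)
    rw [sort_insert_top hsub, List.map_append, List.prod_append]
    simp
  · intro s hs t ht hst
    have hn1 : n ∉ s := fun hn => lt_irrefl n
      (Finset.mem_range.1 ((Finset.mem_powersetCard.1 hs).1 hn))
    have hn2 : n ∉ t := fun hn => lt_irrefl n
      (Finset.mem_range.1 ((Finset.mem_powersetCard.1 ht).1 hn))
    have := congrArg (Finset.erase · n) hst
    simpa [Finset.erase_insert, hn1, hn2] using this
  · rw [Finset.disjoint_right]
    rintro s hs hs'
    obtain ⟨t, ht, rfl⟩ := Finset.mem_image.1 hs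
    have : n ∈ insert n t := Finset.mem_insert_self n t
    have := (Finset.mem_powersetCard.1 hs').1 this
    simp at this

lemma esymm_succ_eq (A : ℕ → Matrix (Fin d) (Fin d) ℂ) (k n : ℕ) :
    esymm A (k+1) n = ∑ m ∈ Finset.range n, esymm A k m * A m := by
  induction n with
  | zero =>
    rw [esymm]
    rw [Finset.range_zero, Finset.powersetCard_eq_empty.2 (by simp)]
    simp
  | succ n ih => rw [esymm_succ_succ, ih, Finset.sum_range_succ]



/-- L1: criterion for tendsto zero. -/
lemma tendsto_zero_of_eps_div (f : ℕ → ℝ) (hf : ∀ n, 0 ≤ f n)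
    (h : ∀ ε : ℝ, 0 < ε → ∃ C : ℝ, 0 ≤ C ∧ ∀ n : ℕ, 1 ≤ n → f n ≤ ε + C / n) :
    Tendsto f atTop (𝓝 0) := by
  rw [Metric.tendsto_atTop]
  intro ε hε
  obtain ⟨C, hC0, hC⟩ := h (ε/3) (by linarith)
  obtain ⟨N, hN⟩ := exists_nat_gt (3*C/ε)
  refine ⟨max (N+1) 1, fun n hn => ?_⟩
  have hn1 : 1 ≤ n := le_trans (le_max_right _ _) hn
  have hnN : (N:ℝ) < n := by
    have : N + 1 ≤ n := le_trans (le_max_left _ _) hn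
    exact_mod_cast Nat.lt_of_lt_of_le (Nat.lt_succ_self N) this
  have hnpos : (0:ℝ) < n := by positivity
  have hCn : C / n < ε/3 + ε/3 := by
    have h1 : 3*C/ε < n := lt_trans hN hnN
    have : C / n < ε/3 := by
      rw [div_lt_iff₀ hnpos]
      rw [div_lt_iff₀ hε] at h1
      nlinarith
    linarith
  have := hC n hn1
  rw [Real.dist_eq, abs_sub_comm, abs_of_nonpos (by linarith [hf n])]
  simp only [neg_sub, sub_zero]
  calc f n ≤ ε/3 + C/n := this
    _ < ε/3 + (ε/3 + ε/3) := by linarith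
    _ = ε := by ring

/-- L2: eventual linear bound from a tendsto-zero of ratios. -/
lemma linear_bound_of_tendsto (g : ℕ → ℝ) (p : ℕ) (hg : ∀ n, 0 ≤ g n)
    (h : Tendsto (fun n : ℕ => g n / (n:ℝ)^p) atTop (𝓝 0)) (ε : ℝ) (hε : 0 < ε) :
    ∃ C : ℝ, 0 ≤ C ∧ ∀ n : ℕ, g n ≤ ε * (n:ℝ)^p + C := by
  rw [Metric.tendsto_atTop] at h
  obtain ⟨N, hN⟩ := h ε hε
  refine ⟨∑ j ∈ Finset.range (N+1), g j, Finset.sum_nonneg fun j _ => hg j, fun n => ?_⟩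
  rcases lt_or_ge n (N+1) with hn | hn
  · have : g n ≤ ∑ j ∈ Finset.range (N+1), g j :=
      Finset.single_le_sum (fun j _ => hg j) (Finset.mem_range.2 hn)
    have h2 : 0 ≤ ε * (n:ℝ)^p := by positivity
    linarith
  · have hnN : N ≤ n := by omega
    have hn1 : 1 ≤ n := by omega
    have hn0 : (0:ℝ) < n := by exact_mod_cast hn1
    have hnpos : (0:ℝ) < (n:ℝ)^p := by positivity
    have := hN n hnN
    rw [Real.dist_eq, sub_zero, abs_of_nonneg (div_nonneg (hg n) hnpos.le)] at this
    have : g n ≤ ε * (n:ℝ)^p := by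
      rw [div_lt_iff₀ hnpos] at this
      linarith
    have h3 : (0:ℝ) ≤ ∑ j ∈ Finset.range (N+1), g j :=
      Finset.sum_nonneg fun j _ => hg j
    linarith

/-- Per-term telescoping bound. -/
lemma pow_succ_sub_bounds (k m : ℕ) :
    (k+1:ℝ) * (m:ℝ)^k ≤ ((m:ℝ)+1)^(k+1) - (m:ℝ)^(k+1) ∧
      ((m:ℝ)+1)^(k+1) - (m:ℝ)^(k+1) ≤ (k+1:ℝ) * ((m:ℝ)+1)^k := by
  have hid := geom_sum₂_mul ((m:ℝ)+1) (m:ℝ) (k+1)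
  simp only [add_sub_cancel_left, mul_one] at hid
  have hm : (0:ℝ) ≤ m := Nat.cast_nonneg m
  constructor
  · rw [← hid]
    have : ∀ i ∈ Finset.range (k+1), (m:ℝ)^k ≤ ((m:ℝ)+1)^i * (m:ℝ)^(k+1-1-i) := by
      intro i hi
      have hik : i ≤ k := by simpa [Nat.lt_succ_iff] using hi
      have h1 : (m:ℝ)^i ≤ ((m:ℝ)+1)^i := pow_le_pow_left₀ hm (by linarith) i
      calc (m:ℝ)^k = (m:ℝ)^i * (m:ℝ)^(k-i) := by
            rw [← pow_add]; congr 1; omega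
        _ ≤ ((m:ℝ)+1)^i * (m:ℝ)^(k+1-1-i) := by
            have : k + 1 - 1 - i = k - i := by omega
            rw [this]
            exact mul_le_mul_of_nonneg_right h1 (by positivity)
    calc (k+1:ℝ) * (m:ℝ)^k = ∑ _i ∈ Finset.range (k+1), (m:ℝ)^k := by
          rw [Finset.sum_const, Finset.card_range]; push_cast; ring
      _ ≤ _ := Finset.sum_le_sum this
  · rw [← hid]
    have : ∀ i ∈ Finset.range (k+1), ((m:ℝ)+1)^i * (m:ℝ)^(k+1-1-i) ≤ ((m:ℝ)+1)^k := by
      intro i hi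
      have hik : i ≤ k := by simpa [Nat.lt_succ_iff] using hi
      have h1 : (m:ℝ)^(k-i) ≤ ((m:ℝ)+1)^(k-i) := pow_le_pow_left₀ hm (by linarith) _
      calc ((m:ℝ)+1)^i * (m:ℝ)^(k+1-1-i) ≤ ((m:ℝ)+1)^i * ((m:ℝ)+1)^(k-i) := by
            have : k + 1 - 1 - i = k - i := by omega
            rw [this]
            exact mul_le_mul_of_nonneg_left h1 (by positivity)
        _ = ((m:ℝ)+1)^k := by rw [← pow_add]; congr 1; omega
    calc _ ≤ ∑ _i ∈ Finset.range (k+1), ((m:ℝ)+1)^k := Finset.sum_le_sum this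
      _ = (k+1:ℝ) * ((m:ℝ)+1)^k := by
          rw [Finset.sum_const, Finset.card_range]; push_cast; ring

/-- Two-sided bound for power sums. -/
lemma sum_range_pow_bounds (k n : ℕ) :
    (k+1:ℝ) * ∑ m ∈ Finset.range n, (m:ℝ)^k ≤ (n:ℝ)^(k+1) ∧
      (n:ℝ)^(k+1) ≤ (k+1:ℝ) * (∑ m ∈ Finset.range n, (m:ℝ)^k) + (k+1:ℝ) * (n:ℝ)^k := by
  have htel : ∑ m ∈ Finset.range n, (((m:ℝ)+1)^(k+1) - (m:ℝ)^(k+1)) = (n:ℝ)^(k+1) := by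
    have := Finset.sum_range_sub (fun m : ℕ => (m:ℝ)^(k+1)) n
    simp only [Nat.cast_succ] at this ⊢
    rw [this]
    simp [zero_pow (Nat.succ_ne_zero k)]
  constructor
  · rw [← htel, Finset.mul_sum]
    exact Finset.sum_le_sum fun m _ => (pow_succ_sub_bounds k m).1
  · rw [← htel]
    calc ∑ m ∈ Finset.range n, (((m:ℝ)+1)^(k+1) - (m:ℝ)^(k+1))
        ≤ ∑ m ∈ Finset.range n, (k+1:ℝ) * ((m:ℝ)+1)^k :=
          Finset.sum_le_sum fun m _ => (pow_succ_sub_bounds k m).2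
      _ = (k+1:ℝ) * ∑ m ∈ Finset.range n, ((m:ℝ)+1)^k := by rw [Finset.mul_sum]
      _ ≤ (k+1:ℝ) * ((∑ m ∈ Finset.range n, (m:ℝ)^k) + (n:ℝ)^k) := by
          have : ∑ m ∈ Finset.range n, ((m:ℝ)+1)^k
              ≤ (∑ m ∈ Finset.range n, (m:ℝ)^k) + (n:ℝ)^k := by
            have h1 : ∑ m ∈ Finset.range n, (((m:ℕ)+1:ℕ):ℝ)^k
                = ∑ m ∈ Finset.range (n+1), (m:ℝ)^k - (0:ℝ)^k := by
              rw [Finset.sum_range_succ' (fun m : ℕ => (m:ℝ)^k) n]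
              push_cast
              ring
            have h2 : ∑ m ∈ Finset.range (n+1), (m:ℝ)^k
                = (∑ m ∈ Finset.range n, (m:ℝ)^k) + (n:ℝ)^k := Finset.sum_range_succ _ n
            have h0 : (0:ℝ) ≤ (0:ℝ)^k := by positivity
            calc ∑ m ∈ Finset.range n, ((m:ℝ)+1)^k
                = ∑ m ∈ Finset.range n, (((m:ℕ)+1:ℕ):ℝ)^k := by push_cast; rfl
              _ = ∑ m ∈ Finset.range (n+1), (m:ℝ)^k - (0:ℝ)^k := h1
              _ ≤ (∑ m ∈ Finset.range n, (m:ℝ)^k) + (n:ℝ)^k := by rw [h2]; linarith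
          have hk1 : (0:ℝ) ≤ (k+1:ℝ) := by positivity
          exact mul_le_mul_of_nonneg_left this hk1
      _ = (k+1:ℝ) * (∑ m ∈ Finset.range n, (m:ℝ)^k) + (k+1:ℝ) * (n:ℝ)^k := by ring


section
variable {d : ℕ}

lemma wsum_small (B : ℕ → Matrix (Fin d) (Fin d) ℂ)
    (hT : Tendsto (fun n : ℕ => ‖∑ m ∈ Finset.range n, B m‖ / (n:ℝ)) atTop (𝓝 0)) (k : ℕ) :
    Tendsto (fun n : ℕ => ‖∑ m ∈ Finset.range n, ((m:ℂ)^k) • B m‖ / (n:ℝ)^(k+1))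
      atTop (𝓝 0) := by
  set T : ℕ → Matrix (Fin d) (Fin d) ℂ := fun n => ∑ m ∈ Finset.range n, B m with hTdef
  apply tendsto_zero_of_eps_div
  · intro n
    positivity
  intro ε hε
  have hT1 : Tendsto (fun n : ℕ => ‖T n‖ / (n:ℝ)^1) atTop (𝓝 0) := by
    simpa [pow_one] using hT
  obtain ⟨C, hC0, hC⟩ := linear_bound_of_tendsto (fun n => ‖T n‖) 1 (fun n => norm_nonneg _)
    hT1 (ε/2) (by linarith)
  simp only [pow_one] at hC
  refine ⟨2*C, by linarith, fun n hn => ?_⟩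
  have hn0 : (0:ℝ) < n := by exact_mod_cast hn
  have hnp : (0:ℝ) < (n:ℝ)^(k+1) := by positivity
  -- Abel summation
  have habel := Finset.sum_range_by_parts (fun i : ℕ => (i:ℂ)^k) B n
  simp only at habel
  -- bound the norm
  have hkey : ‖∑ m ∈ Finset.range n, ((m:ℂ)^k) • B m‖ ≤ ε * (n:ℝ)^(k+1) + 2*C * (n:ℝ)^k := by
    rw [habel]
    have h1 : ‖((n-1:ℕ):ℂ)^k • T n‖ ≤ (n:ℝ)^k * (ε/2 * n + C) := by
      rw [norm_smul, norm_pow]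
      have e1 : ‖((n-1:ℕ):ℂ)‖ = ((n-1:ℕ):ℝ) := by
        simp
      rw [e1]
      have e2 : ((n-1:ℕ):ℝ)^k ≤ (n:ℝ)^k := by
        apply pow_le_pow_left₀ (by positivity)
        exact_mod_cast Nat.sub_le n 1
      have e3 : ‖T n‖ ≤ ε/2 * n + C := hC n
      have e4 : (0:ℝ) ≤ ‖T n‖ := norm_nonneg _
      calc ((n-1:ℕ):ℝ)^k * ‖T n‖ ≤ (n:ℝ)^k * ‖T n‖ :=
            mul_le_mul_of_nonneg_right e2 e4
        _ ≤ (n:ℝ)^k * (ε/2 * n + C) := by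
            apply mul_le_mul_of_nonneg_left e3 (by positivity)
    have h2 : ‖∑ i ∈ Finset.range (n-1), (((i+1:ℕ):ℂ)^k - ((i:ℕ):ℂ)^k) • T (i+1)‖
        ≤ (ε/2 * n + C) * (n:ℝ)^k := by
      calc ‖∑ i ∈ Finset.range (n-1), (((i+1:ℕ):ℂ)^k - ((i:ℕ):ℂ)^k) • T (i+1)‖
          ≤ ∑ i ∈ Finset.range (n-1), ‖(((i+1:ℕ):ℂ)^k - ((i:ℕ):ℂ)^k) • T (i+1)‖ :=
            norm_sum_le _ _
        _ ≤ ∑ i ∈ Finset.range (n-1), (((i+1:ℕ):ℝ)^k - ((i:ℕ):ℝ)^k) * (ε/2 * n + C) := by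
            refine Finset.sum_le_sum fun i hi => ?_
            rw [norm_smul]
            have hw : ‖((i+1:ℕ):ℂ)^k - ((i:ℕ):ℂ)^k‖ = ((i+1:ℕ):ℝ)^k - ((i:ℕ):ℝ)^k := by
              have : ((i+1:ℕ):ℂ)^k - ((i:ℕ):ℂ)^k
                  = (((((i+1:ℕ):ℝ)^k - ((i:ℕ):ℝ)^k : ℝ)) : ℂ) := by push_cast; ring
              rw [this, Complex.norm_real, Real.norm_eq_abs]
              have : ((i:ℕ):ℝ)^k ≤ ((i+1:ℕ):ℝ)^k := by
                apply pow_le_pow_left₀ (by positivity)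
                push_cast; linarith
              rw [abs_of_nonneg (by linarith)]
            rw [hw]
            have hi' : i + 1 ≤ n := by
              have := Finset.mem_range.1 hi; omega
            have hTi : ‖T (i+1)‖ ≤ ε/2 * (i+1) + C := by
              have := hC (i+1); push_cast at this ⊢; linarith
            have hTi' : ε/2 * ((i+1:ℕ):ℝ) + C ≤ ε/2 * n + C := by
              have : ((i+1:ℕ):ℝ) ≤ (n:ℝ) := by exact_mod_cast hi'
              nlinarith
            have hwnn : (0:ℝ) ≤ ((i+1:ℕ):ℝ)^k - ((i:ℕ):ℝ)^k := by
              have : ((i:ℕ):ℝ)^k ≤ ((i+1:ℕ):ℝ)^k := by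
                apply pow_le_pow_left₀ (by positivity)
                push_cast; linarith
              linarith
            calc (((i+1:ℕ):ℝ)^k - ((i:ℕ):ℝ)^k) * ‖T (i+1)‖
                ≤ (((i+1:ℕ):ℝ)^k - ((i:ℕ):ℝ)^k) * (ε/2 * (i+1) + C) := by
                  apply mul_le_mul_of_nonneg_left _ hwnn
                  exact_mod_cast hTi
              _ ≤ (((i+1:ℕ):ℝ)^k - ((i:ℕ):ℝ)^k) * (ε/2 * n + C) := by
                  apply mul_le_mul_of_nonneg_left _ hwnn
                  exact_mod_cast hTi'
        _ = (∑ i ∈ Finset.range (n-1), (((i+1:ℕ):ℝ)^k - ((i:ℕ):ℝ)^k)) * (ε/2 * n + C) := by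
            rw [Finset.sum_mul]
        _ ≤ (n:ℝ)^k * (ε/2 * n + C) := by
            have htel : ∑ i ∈ Finset.range (n-1), (((i+1:ℕ):ℝ)^k - ((i:ℕ):ℝ)^k)
                = ((n-1:ℕ):ℝ)^k - ((0:ℕ):ℝ)^k := by
              exact_mod_cast Finset.sum_range_sub (fun i : ℕ => ((i:ℕ):ℝ)^k) (n-1)
            rw [htel]
            have h5 : ((n-1:ℕ):ℝ)^k ≤ (n:ℝ)^k := by
              apply pow_le_pow_left₀ (by positivity)
              exact_mod_cast Nat.sub_le n 1
            have h6 : (0:ℝ) ≤ ((0:ℕ):ℝ)^k := by positivity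
            have h7 : (0:ℝ) ≤ ε/2 * n + C := by nlinarith
            have h8 : ((n-1:ℕ):ℝ)^k - ((0:ℕ):ℝ)^k ≤ (n:ℝ)^k := by linarith
            exact mul_le_mul_of_nonneg_right h8 h7
        _ = (ε/2 * n + C) * (n:ℝ)^k := by ring
    calc ‖((n-1:ℕ):ℂ)^k • T n - ∑ i ∈ Finset.range (n-1),
            (((i+1:ℕ):ℂ)^k - ((i:ℕ):ℂ)^k) • T (i+1)‖
        ≤ ‖((n-1:ℕ):ℂ)^k • T n‖ + ‖∑ i ∈ Finset.range (n-1),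
            (((i+1:ℕ):ℂ)^k - ((i:ℕ):ℂ)^k) • T (i+1)‖ := norm_sub_le _ _
      _ ≤ (n:ℝ)^k * (ε/2 * n + C) + (ε/2 * n + C) * (n:ℝ)^k := add_le_add h1 h2
      _ = ε * (n:ℝ)^(k+1) + 2*C * (n:ℝ)^k := by ring
  rw [div_le_iff₀ hnp]
  have : (ε + 2*C/n) * (n:ℝ)^(k+1) = ε * (n:ℝ)^(k+1) + 2*C * (n:ℝ)^k := by
    field_simp
    ring
  rw [this]
  exact hkey

lemma key_invariant (A : ℕ → Matrix (Fin d) (Fin d) ℂ) (Alim : Matrix (Fin d) (Fin d) ℂ)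
    (α : ℝ) (hα : 0 ≤ α)
    (hT : Tendsto (fun n : ℕ => ‖∑ m ∈ Finset.range n, (A m - Alim)‖ / (n:ℝ)) atTop (𝓝 0))
    (hA : ∀ n : ℕ, 1 ≤ n → ∑ m ∈ Finset.range n, ‖A m‖ ≤ α * n) :
    ∀ k : ℕ, 1 ≤ k → Tendsto (fun n : ℕ =>
      ‖esymm A k n - ((n:ℂ)^k) • (((k.factorial:ℂ))⁻¹ • Alim^k)‖ / (n:ℝ)^k)
      atTop (𝓝 0) := by
  intro k hk
  induction k, hk using Nat.le_induction with
  | base =>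
    have h1 : ∀ n, esymm A 1 n = ∑ m ∈ Finset.range n, A m := by
      intro n
      rw [esymm_succ_eq A 0 n]
      simp [esymm_zero]
    refine hT.congr (fun n => ?_)
    congr 1
    · congr 1
      rw [h1, Nat.factorial_one, Nat.cast_one, inv_one, one_smul, pow_one, pow_one,
        Finset.sum_sub_distrib, Finset.sum_const, Finset.card_range,
        Nat.cast_smul_eq_nsmul ℂ]
    · exact (pow_one _).symm
  | succ k hk ih =>
    set L : Matrix (Fin d) (Fin d) ℂ := ((k.factorial:ℂ))⁻¹ • Alim^k with hL
    set L' : Matrix (Fin d) (Fin d) ℂ := (((k+1).factorial:ℂ))⁻¹ • Alim^(k+1) with hL'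
    set E : ℕ → Matrix (Fin d) (Fin d) ℂ := fun m => esymm A k m - (m:ℂ)^k • L with hE
    set σ : ℕ → ℂ :=
      fun n => ((k:ℂ)+1) * (∑ m ∈ Finset.range n, (m:ℂ)^k) - (n:ℂ)^(k+1) with hσ
    set R2 : ℕ → Matrix (Fin d) (Fin d) ℂ :=
      fun n => ∑ m ∈ Finset.range n, (m:ℂ)^k • (A m - Alim) with hR2
    set R1 : ℕ → Matrix (Fin d) (Fin d) ℂ :=
      fun n => ∑ m ∈ Finset.range n, E m * A m with hR1
    have hLA : L * Alim = ((k:ℂ)+1) • L' := by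
      rw [hL, hL', smul_mul_assoc, ← pow_succ, smul_smul]
      congr 1
      have hfac : (((k+1).factorial : ℕ):ℂ) = ((k:ℂ)+1) * (k.factorial:ℂ) := by
        rw [Nat.factorial_succ]
        push_cast
        ring
      rw [hfac]
      have h1 : ((k:ℂ)+1) ≠ 0 := Nat.cast_add_one_ne_zero k
      have h2 : ((k.factorial:ℕ):ℂ) ≠ 0 := by
        exact_mod_cast Nat.cast_ne_zero.2 k.factorial_ne_zero
      field_simp
    have hiden : ∀ n, esymm A (k+1) n - (n:ℂ)^(k+1) • L'
        = σ n • L' + (L * R2 n + R1 n) := by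
      intro n
      rw [esymm_succ_eq]
      have hterm : ∀ m ∈ Finset.range n, esymm A k m * A m
          = (m:ℂ)^k • (L * Alim) + ((m:ℂ)^k • (L * (A m - Alim)) + E m * A m) := by
        intro m _
        have h0 : esymm A k m = (m:ℂ)^k • L + E m := by
          rw [hE]; module
        rw [h0, add_mul, smul_mul_assoc, mul_sub, smul_sub]
        module
      rw [Finset.sum_congr rfl hterm, Finset.sum_add_distrib, Finset.sum_add_distrib,
        ← Finset.sum_smul]
      have h2 : ∑ m ∈ Finset.range n, (m:ℂ)^k • (L * (A m - Alim)) = L * R2 n := by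
        rw [hR2, Finset.mul_sum]
        exact Finset.sum_congr rfl fun m _ => (mul_smul_comm _ _ _).symm
      rw [h2, hLA, smul_smul, hσ, sub_smul]
      module
    -- the three bounding functions
    have hg1 : Tendsto (fun n : ℕ => ‖σ n • L'‖ / (n:ℝ)^(k+1)) atTop (𝓝 0) := by
      apply squeeze_zero' (Eventually.of_forall fun n => by positivity)
        (g := fun n : ℕ => (((k:ℝ)+1) * ‖L'‖) / n)
      · filter_upwards [eventually_ge_atTop 1] with n hn
        have hn0 : (0:ℝ) < n := by exact_mod_cast hn
        have hσn : ‖σ n‖ ≤ ((k:ℝ)+1) * (n:ℝ)^k := by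
          have hcast : σ n = (((k+1:ℝ) * (∑ m ∈ Finset.range n, (m:ℝ)^k)
              - (n:ℝ)^(k+1) : ℝ) : ℂ) := by
            rw [hσ]
            push_cast
            ring
          rw [hcast, Complex.norm_real, Real.norm_eq_abs]
          have hb := sum_range_pow_bounds k n
          have hpos : (0:ℝ) ≤ ((k:ℝ)+1) * (n:ℝ)^k := by positivity
          rw [abs_le]
          constructor
          · nlinarith [hb.2]
          · nlinarith [hb.1]
        rw [norm_smul]
        have hstep : ‖σ n‖ * ‖L'‖ ≤ ((k:ℝ)+1) * (n:ℝ)^k * ‖L'‖ :=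
          mul_le_mul_of_nonneg_right hσn (norm_nonneg _)
        have heq : ((k:ℝ)+1) * (n:ℝ)^k * ‖L'‖ / (n:ℝ)^(k+1) = ((k:ℝ)+1) * ‖L'‖ / n := by
          field_simp
          ring
        rw [← heq]
        gcongr
      · exact tendsto_const_div_atTop_nhds_zero_nat _
    have hg2 : Tendsto (fun n : ℕ => ‖L‖ * (‖R2 n‖ / (n:ℝ)^(k+1))) atTop (𝓝 0) := by
      have := (wsum_small (fun m => A m - Alim) hT k).const_mul ‖L‖
      simpa using this
    have hg3 : Tendsto (fun n : ℕ => ‖R1 n‖ / (n:ℝ)^(k+1)) atTop (𝓝 0) := by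
      apply tendsto_zero_of_eps_div _ (fun n => by positivity)
      intro ε hε
      have hα1 : (0:ℝ) < α + 1 := by linarith
      obtain ⟨C, hC0, hC⟩ := linear_bound_of_tendsto (fun m => ‖E m‖) k
        (fun m => norm_nonneg _) ih (ε/(α+1)) (by positivity)
      refine ⟨C*α, mul_nonneg hC0 hα, fun n hn => ?_⟩
      have hn0 : (0:ℝ) < n := by exact_mod_cast hn
      have hnp : (0:ℝ) < (n:ℝ)^(k+1) := by positivity
      have hbound : ‖R1 n‖ ≤ (ε/(α+1) * (n:ℝ)^k + C) * (α * n) := by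
        calc ‖R1 n‖ ≤ ∑ m ∈ Finset.range n, ‖E m * A m‖ := norm_sum_le _ _
          _ ≤ ∑ m ∈ Finset.range n, (ε/(α+1) * (n:ℝ)^k + C) * ‖A m‖ := by
              refine Finset.sum_le_sum fun m hm => ?_
              have h1 : ‖E m * A m‖ ≤ ‖E m‖ * ‖A m‖ := norm_mul_le _ _
              have h2 : ‖E m‖ ≤ ε/(α+1) * (m:ℝ)^k + C := hC m
              have h3 : (m:ℝ)^k ≤ (n:ℝ)^k := by
                apply pow_le_pow_left₀ (by positivity)
                exact_mod_cast (Finset.mem_range.1 hm).le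
              have h4 : ‖E m‖ ≤ ε/(α+1) * (n:ℝ)^k + C := by
                have : ε/(α+1) * (m:ℝ)^k ≤ ε/(α+1) * (n:ℝ)^k := by
                  apply mul_le_mul_of_nonneg_left h3 (by positivity)
                linarith
              calc ‖E m * A m‖ ≤ ‖E m‖ * ‖A m‖ := h1
                _ ≤ (ε/(α+1) * (n:ℝ)^k + C) * ‖A m‖ := by
                    apply mul_le_mul_of_nonneg_right h4 (norm_nonneg _)
          _ = (ε/(α+1) * (n:ℝ)^k + C) * ∑ m ∈ Finset.range n, ‖A m‖ := by
              rw [Finset.mul_sum]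
          _ ≤ (ε/(α+1) * (n:ℝ)^k + C) * (α * n) := by
              apply mul_le_mul_of_nonneg_left (hA n hn) (by positivity)
      rw [div_le_iff₀ hnp]
      have hexp : (ε + C*α/n) * (n:ℝ)^(k+1) = ε * (n:ℝ)^(k+1) + C*α*(n:ℝ)^k := by
        field_simp
        ring
      rw [hexp]
      have h5 : (n:ℝ) ≤ (n:ℝ)^k := by
        calc (n:ℝ) = (n:ℝ)^1 := (pow_one _).symm
          _ ≤ (n:ℝ)^k := pow_le_pow_right₀ (by exact_mod_cast hn) hk
      have h6 : α/(α+1) ≤ 1 := by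
        rw [div_le_one hα1]; linarith
      have h7 : (ε/(α+1) * (n:ℝ)^k + C) * (α * n)
          = (α/(α+1)) * ε * (n:ℝ)^k * n + C*α*n := by ring
      have h8 : (n:ℝ)^k * n = (n:ℝ)^(k+1) := by ring
      have hX : (0:ℝ) ≤ ε * ((n:ℝ)^k * n) := by positivity
      have h9 := mul_le_mul_of_nonneg_right h6 hX
      have h10 : C*α*(n:ℝ) ≤ C*α*(n:ℝ)^k :=
        mul_le_mul_of_nonneg_left h5 (mul_nonneg hC0 hα)
      have hb2 : ‖R1 n‖ ≤ α/(α+1) * ε * (n:ℝ)^k * n + C*α*n := by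
        rw [← h7]; exact hbound
      have h8' : ε * ((n:ℝ)^k*(n:ℝ)) = ε * (n:ℝ)^(k+1) := by rw [h8]
      linarith [h9, h10, hb2, h8']
    -- combine
    have hsum : Tendsto (fun n : ℕ => ‖σ n • L'‖ / (n:ℝ)^(k+1)
        + (‖L‖ * (‖R2 n‖ / (n:ℝ)^(k+1)) + ‖R1 n‖ / (n:ℝ)^(k+1))) atTop (𝓝 0) := by
      have := hg1.add (hg2.add hg3)
      simpa using this
    apply squeeze_zero' (Eventually.of_forall fun n => by positivity) _ hsum
    filter_upwards [eventually_ge_atTop 1] with n hn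
    have hn0 : (0:ℝ) < n := by exact_mod_cast hn
    have hnp : (0:ℝ) < (n:ℝ)^(k+1) := by positivity
    rw [hiden n]
    have hnorm : ‖σ n • L' + (L * R2 n + R1 n)‖
        ≤ ‖σ n • L'‖ + (‖L‖ * ‖R2 n‖ + ‖R1 n‖) := by
      calc ‖σ n • L' + (L * R2 n + R1 n)‖ ≤ ‖σ n • L'‖ + ‖L * R2 n + R1 n‖ :=
            norm_add_le _ _
        _ ≤ ‖σ n • L'‖ + (‖L * R2 n‖ + ‖R1 n‖) := by
            have := norm_add_le (L * R2 n) (R1 n)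
            linarith
        _ ≤ ‖σ n • L'‖ + (‖L‖ * ‖R2 n‖ + ‖R1 n‖) := by
            have := norm_mul_le L (R2 n)
            linarith
    calc ‖σ n • L' + (L * R2 n + R1 n)‖ / (n:ℝ)^(k+1)
        ≤ (‖σ n • L'‖ + (‖L‖ * ‖R2 n‖ + ‖R1 n‖)) / (n:ℝ)^(k+1) := by
          gcongr
      _ = ‖σ n • L'‖ / (n:ℝ)^(k+1) + (‖L‖ * (‖R2 n‖ / (n:ℝ)^(k+1))
          + ‖R1 n‖ / (n:ℝ)^(k+1)) := by
          rw [add_div, add_div, mul_div_assoc]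
end

/-- Under the hypotheses of the main theorem, the normalized elementary symmetric sums of
order `k` of the matrices converge to `A^k / k!`. -/
theorem statement6 {d : ℕ} (A : ℕ → Matrix (Fin d) (Fin d) ℂ) (Alim : Matrix (Fin d) (Fin d) ℂ)
    (hCesaro : Tendsto (fun n : ℕ => ((n : ℂ)⁻¹) • ∑ k ∈ Finset.range n, A k)
      atTop (𝓝 Alim))
    (α : ℝ)
    (hBdd : ∀ n : ℕ, 1 ≤ n → (n : ℝ)⁻¹ * ∑ k ∈ Finset.range (n + 1), ‖A k‖ ≤ α)
    (k : ℕ) (hk : 0 < k) :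
    Tendsto
      (fun n : ℕ =>
        (((n : ℂ) ^ k)⁻¹) •
          ∑ s ∈ Finset.powersetCard k (Finset.range n), ((s.sort (· ≤ ·)).map A).prod)
      atTop (𝓝 (((k.factorial : ℂ))⁻¹ • Alim ^ k)) := by
  have hα : 0 ≤ α := by
    have h1 := hBdd 1 le_rfl
    have h2 : (0:ℝ) ≤ ∑ m ∈ Finset.range 2, ‖A m‖ :=
      Finset.sum_nonneg fun _ _ => norm_nonneg _
    simp only [Nat.cast_one, inv_one, one_mul] at h1
    linarith
  have hA : ∀ n : ℕ, 1 ≤ n → ∑ m ∈ Finset.range n, ‖A m‖ ≤ α * n := by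
    intro n hn
    have hn0 : (0:ℝ) < n := by exact_mod_cast hn
    have h1 := hBdd n hn
    rw [inv_mul_le_iff₀ hn0] at h1
    have h2 : ∑ m ∈ Finset.range n, ‖A m‖ ≤ ∑ m ∈ Finset.range (n+1), ‖A m‖ :=
      Finset.sum_le_sum_of_subset_of_nonneg (Finset.range_subset_range.2 (Nat.le_succ n))
        (fun i _ _ => norm_nonneg _)
    calc ∑ m ∈ Finset.range n, ‖A m‖ ≤ (n:ℝ) * α := le_trans h2 h1
      _ = α * n := mul_comm _ _
  have hT : Tendsto (fun n : ℕ => ‖∑ m ∈ Finset.range n, (A m - Alim)‖ / (n:ℝ))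
      atTop (𝓝 0) := by
    have h0 : Tendsto
        (fun n : ℕ => ‖((n:ℂ)⁻¹) • (∑ m ∈ Finset.range n, A m) - Alim‖) atTop (𝓝 0) :=
      tendsto_iff_norm_sub_tendsto_zero.1 hCesaro
    apply Filter.Tendsto.congr' _ h0
    filter_upwards [eventually_ge_atTop 1] with n hn
    have hn0 : ((n:ℂ)) ≠ 0 := Nat.cast_ne_zero.2 (by omega)
    have e1 : ∑ m ∈ Finset.range n, (A m - Alim)
        = (∑ m ∈ Finset.range n, A m) - (n:ℂ) • Alim := by
      rw [Finset.sum_sub_distrib, Finset.sum_const, Finset.card_range,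
        Nat.cast_smul_eq_nsmul ℂ]
    have e2 : ((n:ℂ)⁻¹) • (∑ m ∈ Finset.range n, A m) - Alim
        = ((n:ℂ)⁻¹) • (∑ m ∈ Finset.range n, (A m - Alim)) := by
      rw [e1, smul_sub, smul_smul, inv_mul_cancel₀ hn0, one_smul]
    rw [e2, norm_smul, norm_inv, Complex.norm_natCast, div_eq_inv_mul]
  have hkey := key_invariant A Alim α hα hT hA k hk
  refine tendsto_iff_norm_sub_tendsto_zero.2 ?_
  apply Filter.Tendsto.congr' _ hkey
  filter_upwards [eventually_ge_atTop 1] with n hn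
  have hc : ((n:ℂ)^k) ≠ 0 := pow_ne_zero _ (Nat.cast_ne_zero.2 (by omega))
  have e3 : ((n:ℂ)^k)⁻¹ • esymm A k n - ((k.factorial:ℂ))⁻¹ • Alim^k
      = ((n:ℂ)^k)⁻¹ • (esymm A k n - (n:ℂ)^k • (((k.factorial:ℂ))⁻¹ • Alim^k)) := by
    rw [smul_sub, smul_smul, inv_mul_cancel₀ hc, one_smul]
  show ‖esymm A k n - ((n:ℂ)^k) • (((k.factorial:ℂ))⁻¹ • Alim^k)‖ / (n:ℝ)^k
      = ‖((n:ℂ)^k)⁻¹ • esymm A k n - ((k.factorial:ℂ))⁻¹ • Alim^k‖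
  rw [e3, norm_smul, norm_inv, norm_pow, Complex.norm_natCast, div_eq_inv_mul]
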